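/- Let s ∈ (1/4,1) and set 2^♯ = 2(3s+1)/(s+1). Let f : ℝ → ℝ satisfy (H0) f is continuous; (H1) lim_{t→0} f(t)/|t|^{2^♯-1} = 0; (H3) lim_{|t|→∞} F(t)/|t|^{2^♯} = +∞; and (H4) t ↦ F̃(t)/|t|^{2^♯} is strictly decreasing on (-∞,0) and strictly increasing on (0,∞), where F(t) = ∫₀^t f(τ)dτ and F̃(t) = f(t)t - 2F(t). Then f(t)t > 2^♯ F(t) > 0 for all t ≠ 0. -/

import Mathlib

open MeasureTheory Filter
open scoped Topology

noncomputable section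

/-- `F(t) = ∫₀ᵗ f(τ) dτ`. -/
def Fint (f : ℝ → ℝ) (t : ℝ) : ℝ := ∫ τ in (0 : ℝ)..t, f τ

/-- `F̃(t) = f(t)t - 2F(t)`. -/
def Ftil (f : ℝ → ℝ) (t : ℝ) : ℝ := f t * t - 2 * Fint f t

/-- The mass critical exponent `2^♯ = 2(3s+1)/(s+1)`. -/
def twoSharp (s : ℝ) : ℝ := 2 * (3 * s + 1) / (s + 1)

/-- If `g` is strictly monotone on `(0,t]` and tends to `0` at `0⁺`, then `g t > 0`. -/
lemma pos_of_aux {g : ℝ → ℝ} {t : ℝ} (ht : 0 < t)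
    (hm : StrictMonoOn g (Set.Ioc 0 t))
    (hlim : Tendsto g (𝓝[>] (0:ℝ)) (𝓝 0)) : 0 < g t := by
  have nonneg : ∀ r, r ∈ Set.Ioc (0:ℝ) t → 0 ≤ g r := by
    intro r hr
    refine le_of_tendsto hlim ?_
    filter_upwards [Ioo_mem_nhdsGT_of_mem (Set.mem_Ico.mpr ⟨le_refl (0:ℝ), hr.1⟩)] with v hv
    exact (hm ⟨hv.1, hv.2.le.trans hr.2⟩ hr hv.2).le
  have h2 : t/2 ∈ Set.Ioc (0:ℝ) t := ⟨by linarith, by linarith⟩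
  exact lt_of_le_of_lt (nonneg _ h2) (hm h2 ⟨ht, le_refl t⟩ (by linarith))

/-- The limit `F(u)/u^p → 0` as `u → 0⁺`, assuming (H1). -/
lemma Fint_div_lim (p : ℝ) (hp : 2 < p) (f : ℝ → ℝ) (hf : Continuous f)
    (h1 : Tendsto (fun u => f u / u ^ (p-1)) (𝓝[>] (0:ℝ)) (𝓝 0)) :
    Tendsto (fun u => Fint f u / u ^ p) (𝓝[>] (0:ℝ)) (𝓝 0) := by
  have hp1 : (0:ℝ) < p - 1 := by linarith
  -- f 0 = 0
  have hrp : Tendsto (fun u : ℝ => u ^ (p-1)) (𝓝[>] (0:ℝ)) (𝓝 0) := by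
    have := (Real.continuousAt_rpow_const 0 (p-1) (Or.inr hp1.le)).tendsto.mono_left
      (nhdsWithin_le_nhds (s := Set.Ioi (0:ℝ)))
    rwa [Real.zero_rpow (by linarith)] at this
  have hf0 : f 0 = 0 := by
    have t1 : Tendsto f (𝓝[>] (0:ℝ)) (𝓝 (f 0)) :=
      (hf.tendsto 0).mono_left (nhdsWithin_le_nhds (s := Set.Ioi (0:ℝ)))
    have t2 : Tendsto f (𝓝[>] (0:ℝ)) (𝓝 0) := by
      have := h1.mul hrp
      rw [mul_zero] at this
      refine this.congr' ?_
      filter_upwards [self_mem_nhdsWithin] with u hu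
      have : (u:ℝ) ^ (p-1) ≠ 0 := ne_of_gt (Real.rpow_pos_of_pos hu _)
      field_simp
    exact tendsto_nhds_unique t1 t2
  rw [NormedAddCommGroup.tendsto_nhds_zero]
  intro ε hε
  have hev : ∀ᶠ u in 𝓝[>] (0:ℝ), |f u / u ^ (p-1)| < ε := by
    have := h1.norm
    rw [norm_zero] at this
    exact (this.eventually (eventually_lt_nhds hε)).mono (fun u hu => hu)
  rw [Filter.Eventually, Metric.mem_nhdsWithin_iff] at hev
  obtain ⟨δ, hδ, hball⟩ := hev
  have hbound : ∀ τ : ℝ, 0 ≤ τ → τ < δ → |f τ| ≤ ε * τ ^ (p-1) := by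
    intro τ hτ0 hτδ
    rcases eq_or_lt_of_le hτ0 with h | h
    · simp [← h, hf0, Real.zero_rpow (by linarith : p - 1 ≠ 0)]
    · have hmem : τ ∈ Metric.ball (0:ℝ) δ ∩ Set.Ioi 0 := by
        constructor
        · simp [Real.ball_eq_Ioo]; constructor <;> [linarith; linarith]
        · exact h
      have h2 := hball hmem
      simp only [Set.mem_setOf_eq] at h2
      have := h2.le
      have hτp : (0:ℝ) < τ ^ (p-1) := Real.rpow_pos_of_pos h _
      rw [abs_div, abs_of_pos hτp, div_le_iff₀ hτp] at this
      linarith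
  filter_upwards [Ioo_mem_nhdsGT_of_mem (Set.mem_Ico.mpr ⟨le_refl (0:ℝ), hδ⟩)] with u hu
  obtain ⟨hu0, huδ⟩ := hu
  have hint1 : IntervalIntegrable (fun τ => |f τ|) volume 0 u :=
    (hf.abs).intervalIntegrable 0 u
  have hint2 : IntervalIntegrable (fun τ => ε * τ ^ (p-1)) volume 0 u :=
    (intervalIntegral.intervalIntegrable_rpow (Or.inl (by linarith))).const_mul ε
  have hcalc : |Fint f u| ≤ ε / p * u ^ p := by
    calc |Fint f u| ≤ ∫ τ in (0:ℝ)..u, |f τ| :=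
          intervalIntegral.abs_integral_le_integral_abs hu0.le
      _ ≤ ∫ τ in (0:ℝ)..u, ε * τ ^ (p-1) := by
          apply intervalIntegral.integral_mono_on hu0.le hint1 hint2
          intro x hx
          exact hbound x hx.1 (lt_of_le_of_lt hx.2 huδ)
      _ = ε / p * u ^ p := by
          rw [intervalIntegral.integral_const_mul, integral_rpow (Or.inl (by linarith))]
          rw [Real.zero_rpow (by linarith : p - 1 + 1 ≠ 0)]
          rw [show p - 1 + 1 = p by ring]
          ring
  have hup : (0:ℝ) < u ^ p := Real.rpow_pos_of_pos hu0 _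
  have : ‖Fint f u / u ^ p‖ ≤ ε / p := by
    rw [Real.norm_eq_abs, abs_div, abs_of_pos hup, div_le_iff₀ hup]
    calc |Fint f u| ≤ ε / p * u ^ p := hcalc
      _ = ε / p * u ^ p := rfl
  have hεp : ε / p < ε := by
    rw [div_lt_iff₀ (by linarith : (0:ℝ) < p)]
    nlinarith
  linarith

/-- Main positive-side lemma. -/
lemma key (p : ℝ) (hp : 2 < p) (f : ℝ → ℝ) (hf : Continuous f)
    (h1 : Tendsto (fun u => f u / u ^ (p-1)) (𝓝[>] (0:ℝ)) (𝓝 0))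
    (h4 : StrictMonoOn (fun u => Ftil f u / u ^ p) (Set.Ioi (0:ℝ)))
    {t : ℝ} (ht : 0 < t) : p * Fint f t < f t * t ∧ 0 < Fint f t := by
  have hF : ∀ u : ℝ, HasDerivAt (Fint f) (f u) u := fun u =>
    (hf.integral_hasStrictDerivAt 0 u).hasDerivAt
  have hFc : Continuous (Fint f) :=
    continuous_iff_continuousAt.mpr fun u => (hF u).continuousAt
  have hFlim : Tendsto (fun u => Fint f u / u ^ p) (𝓝[>] (0:ℝ)) (𝓝 0) :=
    Fint_div_lim p hp f hf h1
  -- limit of the rpow powers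
  have hrpow : ∀ q : ℝ, 0 < q → Tendsto (fun u : ℝ => u ^ q) (𝓝[>] (0:ℝ)) (𝓝 0) := by
    intro q hq
    have := (Real.continuousAt_rpow_const 0 q (Or.inr hq.le)).tendsto.mono_left
      (nhdsWithin_le_nhds (s := Set.Ioi (0:ℝ)))
    rwa [Real.zero_rpow (ne_of_gt hq)] at this
  -- limit of F̃(u)/u^p
  have hFtlim : Tendsto (fun u => Ftil f u / u ^ p) (𝓝[>] (0:ℝ)) (𝓝 0) := by
    have h1' : Tendsto (fun u => f u * u / u ^ p) (𝓝[>] (0:ℝ)) (𝓝 0) := by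
      refine h1.congr' ?_
      filter_upwards [self_mem_nhdsWithin] with u (hu : 0 < u)
      have hsplit : u ^ p = u ^ (p-1) * u := by
        rw [← Real.rpow_add_one (ne_of_gt hu)]; ring_nf
      rw [hsplit]
      have h1 : u ≠ 0 := ne_of_gt hu
      have h2 : u ^ (p-1) ≠ 0 := ne_of_gt (Real.rpow_pos_of_pos hu _)
      field_simp
    have := h1'.sub ((hFlim.const_mul 2))
    norm_num at this
    refine this.congr ?_
    intro u
    simp only [Ftil]
    ring
  -- F̃ > 0 on the positive axis
  have hFtpos : ∀ u : ℝ, 0 < u → 0 < Ftil f u := by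
    intro u hu
    have hmono : StrictMonoOn (fun v => Ftil f v / v ^ p) (Set.Ioc 0 u) :=
      h4.mono Set.Ioc_subset_Ioi_self
    have hposq := pos_of_aux hu hmono hFtlim
    have hup : (0:ℝ) < u ^ p := Real.rpow_pos_of_pos hu _
    have := mul_pos hposq hup
    rwa [div_mul_cancel₀ _ (ne_of_gt hup)] at this
  -- A(u) = F(u)/u², with derivative F̃(u)/u³
  set A : ℝ → ℝ := fun u => Fint f u / u ^ (2:ℕ) with hA_def
  have hA' : ∀ u : ℝ, u ≠ 0 → HasDerivAt A (Ftil f u / u ^ (3:ℕ)) u := by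
    intro u hu
    have h := (hF u).div (hasDerivAt_pow 2 u) (pow_ne_zero 2 hu)
    refine h.congr_deriv ?_
    have hu2 : (u:ℝ) ^ (2:ℕ) ≠ 0 := pow_ne_zero 2 hu
    field_simp [Ftil]
    rw [Ftil]
    ring
  have hAcont : ContinuousOn A (Set.Ioc (0:ℝ) t) :=
    (hFc.continuousOn).div ((continuous_pow 2).continuousOn)
      (fun x hx => pow_ne_zero 2 (ne_of_gt hx.1))
  have hAlim : Tendsto A (𝓝[>] (0:ℝ)) (𝓝 0) := by
    have := hFlim.mul (hrpow (p-2) (by linarith))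
    rw [mul_zero] at this
    refine this.congr' ?_
    filter_upwards [self_mem_nhdsWithin] with u (hu : 0 < u)
    have hsplit : u ^ p = u ^ (2:ℕ) * u ^ (p-2) := by
      rw [← Real.rpow_natCast u 2, ← Real.rpow_add hu]
      norm_num
    have h2 : (u:ℝ) ^ (2:ℕ) ≠ 0 := pow_ne_zero 2 (ne_of_gt hu)
    have h3 : u ^ (p-2) ≠ 0 := ne_of_gt (Real.rpow_pos_of_pos hu _)
    rw [hsplit, ← div_div, div_mul_cancel₀ _ h3]
  -- positivity of F(t)
  have hApos : 0 < A t := by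
    refine pos_of_aux ht ?_ hAlim
    apply strictMonoOn_of_deriv_pos (convex_Ioc 0 t) hAcont
    intro x hx
    rw [interior_Ioc] at hx
    rw [(hA' x (ne_of_gt hx.1)).deriv]
    exact div_pos (hFtpos x hx.1) (pow_pos hx.1 3)
  have hFpos : 0 < Fint f t := by
    have h2 : (0:ℝ) < t ^ (2:ℕ) := pow_pos ht 2
    have := mul_pos hApos h2
    rwa [hA_def, div_mul_cancel₀ _ (ne_of_gt h2)] at this
  refine ⟨?_, hFpos⟩
  -- main inequality via D(u) = c·u^(p-2)/(p-2) - A(u)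
  set c : ℝ := Ftil f t / t ^ p with hc_def
  have hcpos : 0 < c := div_pos (hFtpos t ht) (Real.rpow_pos_of_pos ht p)
  set D : ℝ → ℝ := fun u => c * u ^ (p-2) / (p-2) - A u with hD_def
  have hD' : ∀ u : ℝ, 0 < u → HasDerivAt D (c * u ^ (p-3) - Ftil f u / u ^ (3:ℕ)) u := by
    intro u hu
    have h1 : HasDerivAt (fun u : ℝ => c * u ^ (p-2) / (p-2))
        (c * ((p-2) * u ^ (p-2-1)) / (p-2)) u :=
      ((Real.hasDerivAt_rpow_const (Or.inl (ne_of_gt hu))).const_mul c).div_const (p-2)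
    have h2 := h1.sub (hA' u (ne_of_gt hu))
    refine h2.congr_deriv ?_
    have hp2 : p - 2 ≠ 0 := by linarith
    rw [show p - 2 - 1 = p - 3 by ring]
    field_simp
  have hDmono : StrictMonoOn D (Set.Ioc 0 t) := by
    have hrc : ContinuousOn (fun u : ℝ => u ^ (p-2)) (Set.Ioc 0 t) := fun x hx =>
      (Real.continuousAt_rpow_const x (p-2) (Or.inl (ne_of_gt hx.1))).continuousWithinAt
    apply strictMonoOn_of_deriv_pos (convex_Ioc 0 t)
    · exact ((continuousOn_const.mul hrc).div_const (p-2)).sub hAcont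
    · intro x hx
      rw [interior_Ioc] at hx
      obtain ⟨hx0, hxt⟩ := hx
      rw [(hD' x hx0).deriv]
      have hlt : Ftil f x / x ^ p < c := h4 hx0 ht hxt
      have hxp3 : (0:ℝ) < x ^ (p-3) := Real.rpow_pos_of_pos hx0 _
      have hkey : Ftil f x / x ^ (3:ℕ) = (Ftil f x / x ^ p) * x ^ (p-3) := by
        have hsplit : x ^ p = x ^ (3:ℕ) * x ^ (p-3) := by
          rw [← Real.rpow_natCast x 3, ← Real.rpow_add hx0]
          norm_num
        have h2 : (x:ℝ) ^ (3:ℕ) ≠ 0 := pow_ne_zero 3 (ne_of_gt hx0)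
        have h3 : x ^ (p-3) ≠ 0 := ne_of_gt hxp3
        rw [hsplit]
        field_simp
      rw [hkey, sub_pos]
      exact mul_lt_mul_of_pos_right hlt hxp3
  have hDlim : Tendsto D (𝓝[>] (0:ℝ)) (𝓝 0) := by
    have h1 : Tendsto (fun u : ℝ => c * u ^ (p-2) / (p-2)) (𝓝[>] (0:ℝ)) (𝓝 0) := by
      have := (Filter.Tendsto.const_mul c (hrpow (p-2) (by linarith))).div_const (p-2)
      simpa using this
    have := h1.sub hAlim
    rwa [sub_zero] at this
  have hDpos : 0 < D t := pos_of_aux ht hDmono hDlim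
  -- unravel
  have htp : t ^ p = t ^ (2:ℕ) * t ^ (p-2) := by
    rw [← Real.rpow_natCast t 2, ← Real.rpow_add ht]
    norm_num
  have ht2 : (0:ℝ) < t ^ (2:ℕ) := pow_pos ht 2
  have htp2 : (0:ℝ) < t ^ (p-2) := Real.rpow_pos_of_pos ht _
  have hfinal : Fint f t / t ^ (2:ℕ) < Ftil f t / t ^ p * t ^ (p-2) / (p-2) := by
    have := hDpos
    rw [hD_def] at this
    simp only at this
    linarith
  have hexp : Ftil f t / t ^ p * t ^ (p-2) / (p-2) = Ftil f t / (t ^ (2:ℕ) * (p-2)) := by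
    rw [htp]
    have h3 : t ^ (p-2) ≠ 0 := ne_of_gt htp2
    have hp2 : p - 2 ≠ 0 := by linarith
    field_simp
  rw [hexp] at hfinal
  have hmul := (div_lt_div_iff₀ ht2 (mul_pos ht2 (by linarith : (0:ℝ) < p - 2))).mp hfinal
  have : (p - 2) * Fint f t < Ftil f t := by nlinarith
  simp only [Ftil] at this
  linarith

/-- **Superlinearity of the nonlinearity.**  If `f` is continuous (H0), satisfies (H1)
`f(t)/|t|^{2♯-1} → 0` as `t → 0`, (H3) `F(t)/|t|^{2♯} → +∞` as `|t| → ∞`, and (H4)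
`t ↦ F̃(t)/|t|^{2♯}` is strictly decreasing on `(-∞,0)` and strictly increasing on `(0,∞)`,
then `f(t)t > 2♯ F(t) > 0` for all `t ≠ 0`. -/
theorem nonlinearity_superlinear (s : ℝ) (hs : s ∈ Set.Ioo (1 / 4 : ℝ) 1) (f : ℝ → ℝ)
    (hH0 : Continuous f)
    (hH1 : Tendsto (fun t => f t / |t| ^ (twoSharp s - 1)) (𝓝[≠] (0 : ℝ)) (𝓝 0))
    (hH3 : Tendsto (fun t => Fint f t / |t| ^ twoSharp s) (cocompact ℝ) atTop)
    (hH4a : StrictAntiOn (fun t => Ftil f t / |t| ^ twoSharp s) (Set.Iio (0 : ℝ)))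
    (hH4b : StrictMonoOn (fun t => Ftil f t / |t| ^ twoSharp s) (Set.Ioi (0 : ℝ))) :
    ∀ t : ℝ, t ≠ 0 → twoSharp s * Fint f t < f t * t ∧ 0 < Fint f t := by
  obtain ⟨hs1, hs2⟩ := hs
  have hs1' : (0:ℝ) < s := lt_trans (by norm_num) hs1
  have hp : 2 < twoSharp s := by
    rw [twoSharp, lt_div_iff₀ (by linarith : (0:ℝ) < s + 1)]
    nlinarith
  intro t ht
  rcases ht.lt_or_gt with htneg | htpos
  · -- negative side: reflect
    set g : ℝ → ℝ := fun u => -f (-u) with hg_def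
    have hg : Continuous g := (hH0.comp continuous_neg).neg
    have hFg : ∀ u : ℝ, Fint g u = Fint f (-u) := by
      intro u
      simp only [Fint, hg_def]
      rw [intervalIntegral.integral_neg, intervalIntegral.integral_comp_neg, neg_zero,
        ← intervalIntegral.integral_symm]
    have hFtg : ∀ u : ℝ, Ftil g u = Ftil f (-u) := by
      intro u
      simp only [Ftil, hFg, hg_def]
      rw [← hg_def, hFg]
      ring
    have hnegmap : Tendsto (fun u : ℝ => -u) (𝓝[>] (0:ℝ)) (𝓝[≠] (0:ℝ)) := by
      apply tendsto_nhdsWithin_of_tendsto_nhds_of_eventually_within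
      · simpa using (continuous_neg.tendsto (0:ℝ)).mono_left
          (nhdsWithin_le_nhds (s := Set.Ioi (0:ℝ)))
      · filter_upwards [self_mem_nhdsWithin] with u (hu : 0 < u)
        simp only [Set.mem_compl_iff, Set.mem_singleton_iff]
        intro h
        have : u = 0 := by linarith [neg_eq_zero.mp h]
        exact absurd this (ne_of_gt hu)
    have h1g : Tendsto (fun u => g u / u ^ (twoSharp s - 1)) (𝓝[>] (0:ℝ)) (𝓝 0) := by
      have h := (hH1.comp hnegmap).neg
      rw [neg_zero] at h
      refine h.congr' ?_
      filter_upwards [self_mem_nhdsWithin] with u (hu : 0 < u)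
      simp only [Function.comp_apply, hg_def]
      rw [abs_neg, abs_of_pos hu]
      ring
    have h4g : StrictMonoOn (fun u => Ftil g u / u ^ twoSharp s) (Set.Ioi (0:ℝ)) := by
      intro u hu v hv huv
      have hu' : (0:ℝ) < u := hu
      have hv' : (0:ℝ) < v := hv
      have h := hH4a (show -v ∈ Set.Iio (0:ℝ) by simpa using hv')
        (show -u ∈ Set.Iio (0:ℝ) by simpa using hu') (by linarith : -v < -u)
      simp only at h ⊢
      rw [abs_neg, abs_neg, abs_of_pos hu', abs_of_pos hv'] at h
      rwa [hFtg, hFtg]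
    have hkey := key (twoSharp s) hp g hg h1g h4g (show (0:ℝ) < -t by linarith)
    rw [hFg, neg_neg] at hkey
    refine ⟨?_, hkey.2⟩
    have h1 := hkey.1
    have h2 : g (-t) * (-t) = f t * t := by
      simp only [hg_def, neg_neg]
      ring
    linarith [h2 ▸ h1]
  · -- positive side
    have h1' : Tendsto (fun u => f u / u ^ (twoSharp s - 1)) (𝓝[>] (0:ℝ)) (𝓝 0) := by
      refine (hH1.mono_left (nhdsWithin_mono 0 ?_)).congr' ?_
      · intro x hx
        exact ne_of_gt hx
      · filter_upwards [self_mem_nhdsWithin] with u (hu : 0 < u)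
        rw [abs_of_pos hu]
    have h4' : StrictMonoOn (fun u => Ftil f u / u ^ twoSharp s) (Set.Ioi (0:ℝ)) := by
      intro u hu v hv huv
      have h := hH4b hu hv huv
      simp only at h ⊢
      rwa [abs_of_pos (show (0:ℝ) < u from hu), abs_of_pos (show (0:ℝ) < v from hv)] at h
    exact key (twoSharp s) hp f hH0 h1' h4' htpos

end
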